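/- If a : Fin N → ℝ is a cyclic orthonormal generator in ℝ^N, then there exists a representation θ : Fin N → ℝ of a such that θ_0 ≡ π/4 (mod 2π) or θ_0 ≡ 5π/4 (mod 2π), and θ_n + θ_{−n} ≡ π/2 (mod 2π) for every n ∈ Fin N with n ≠ 0 (where −n denotes negation in Fin N). -/

import Mathlib

open Real
open Fin.NatCast Fin.CommRing

noncomputable def Efun (N : ℕ) (m : Fin N) : ℂ :=
  Complex.exp (2 * (π : ℂ) * Complex.I * (m : ℕ) / N)

lemma Efun_natCast (N : ℕ) [NeZero N] (m : ℕ) :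
    Efun N (m : Fin N) = Complex.exp (2 * (π : ℂ) * Complex.I * m / N) := by
  unfold Efun
  rw [Fin.val_natCast]
  have hN : (N : ℂ) ≠ 0 := Nat.cast_ne_zero.mpr (NeZero.ne N)
  have h : ((m % N : ℕ) : ℂ) + ((m / N : ℕ) : ℂ) * N = m := by
    exact_mod_cast congrArg (Nat.cast (R := ℂ)) (Nat.mod_add_div' m N)
  conv_rhs => rw [← h]
  rw [show 2 * (π : ℂ) * Complex.I * (((m % N : ℕ) : ℂ) + ((m / N : ℕ) : ℂ) * N) / N
      = 2 * (π : ℂ) * Complex.I * ((m % N : ℕ) : ℂ) / N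
        + ((m / N : ℕ) : ℂ) * (2 * (π : ℂ) * Complex.I) by field_simp]
  rw [Complex.exp_add]
  have h1 : Complex.exp (((m / N : ℕ) : ℂ) * (2 * (π : ℂ) * Complex.I)) = 1 := by
    have := Complex.exp_int_mul_two_pi_mul_I ((m / N : ℕ) : ℤ)
    rwa [Int.cast_natCast] at this
  rw [h1, mul_one]

lemma Efun_zero (N : ℕ) [NeZero N] : Efun N 0 = 1 := by
  unfold Efun; simp

lemma Efun_add (N : ℕ) [NeZero N] (j k : Fin N) :
    Efun N (j + k) = Efun N j * Efun N k := by
  have : j + k = (((j : ℕ) + (k : ℕ) : ℕ) : Fin N) := by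
    push_cast [Fin.cast_val_eq_self]; rfl
  rw [this, Efun_natCast]
  unfold Efun
  rw [← Complex.exp_add]
  congr 1
  push_cast
  ring

lemma Efun_mul_val (N : ℕ) [NeZero N] (n k : Fin N) :
    Efun N (n * k) = Complex.exp (2 * (π : ℂ) * Complex.I * ((n : ℕ) * (k : ℕ)) / N) := by
  have : n * k = (((n : ℕ) * (k : ℕ) : ℕ) : Fin N) := by
    push_cast [Fin.cast_val_eq_self]; rfl
  rw [this, Efun_natCast]
  norm_cast

lemma Efun_conj (N : ℕ) [NeZero N] (m : Fin N) :
    (starRingEnd ℂ) (Efun N m) = Efun N (-m) := by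
  have h1 : Efun N m * Efun N (-m) = 1 := by
    rw [← Efun_add, add_neg_cancel, Efun_zero]
  have h2 : Efun N m * (starRingEnd ℂ) (Efun N m) = 1 := by
    unfold Efun
    rw [← Complex.exp_conj, ← Complex.exp_add]
    rw [show (2 * (π : ℂ) * Complex.I * (m : ℕ) / N) +
        (starRingEnd ℂ) (2 * (π : ℂ) * Complex.I * (m : ℕ) / N) = 0 by
      simp [map_div₀, Complex.conj_I, map_ofNat]; ring]
    exact Complex.exp_zero
  have hne : Efun N m ≠ 0 := Complex.exp_ne_zero _
  rw [← h1] at h2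
  exact mul_left_cancel₀ hne h2

lemma Efun_orth (N : ℕ) [NeZero N] (s : Fin N) :
    ∑ n : Fin N, Efun N (n * s) = if s = 0 then (N : ℂ) else 0 := by
  have hN : (N : ℂ) ≠ 0 := Nat.cast_ne_zero.mpr (NeZero.ne N)
  have key : ∀ n : Fin N, Efun N (n * s) = (Efun N s) ^ (n : ℕ) := by
    intro n
    rw [Efun_mul_val]
    unfold Efun
    rw [← Complex.exp_nat_mul]
    congr 1
    push_cast
    ring
  simp only [key]
  rw [Fin.sum_univ_eq_sum_range (fun i => Efun N s ^ i) N]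
  by_cases hs : s = 0
  · simp [hs, Efun_zero]
  · rw [if_neg hs]
    have hne1 : Efun N s ≠ 1 := by
      intro h
      unfold Efun at h
      rw [Complex.exp_eq_one_iff] at h
      obtain ⟨n, hn⟩ := h
      have hI : (2 * (π : ℂ) * Complex.I) ≠ 0 := by
        simp [Real.pi_ne_zero, Complex.I_ne_zero]
      field_simp at hn
      have h3 : ((s : ℕ) : ℂ) = (n : ℂ) * N := by
        have h' : 2 * (π : ℂ) * Complex.I * ((s:ℕ):ℂ)
            = 2 * (π : ℂ) * Complex.I * ((n:ℂ) * N) := by linear_combination (2 * (π : ℂ) * Complex.I) * hn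
        exact mul_left_cancel₀ hI h'
      have h4 : ((s : ℕ) : ℤ) = n * N := by exact_mod_cast h3
      have hlt : ((s : ℕ) : ℤ) < N := by exact_mod_cast s.isLt
      have hpos : (0 : ℤ) < (s : ℕ) := by
        exact_mod_cast Nat.pos_of_ne_zero (fun h0 => hs (Fin.ext h0))
      have hNZ : (0 : ℤ) < N := by exact_mod_cast Nat.pos_of_ne_zero (NeZero.ne N)
      have h5 : (0 : ℤ) < n * N := h4 ▸ hpos
      have h6 : n * N < N := h4 ▸ hlt
      have hn0 : 0 < n := by
        by_contra h
        push_neg at h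
        nlinarith
      nlinarith [mul_le_mul_of_nonneg_right (by omega : (1:ℤ) ≤ n) (le_of_lt hNZ)]
    rw [geom_sum_eq hne1]
    have hpow : Efun N s ^ N = 1 := by
      unfold Efun
      rw [← Complex.exp_nat_mul]
      have : (N : ℂ) * (2 * (π : ℂ) * Complex.I * ((s:ℕ):ℂ) / N) = ((s:ℕ):ℤ) * (2 * (π : ℂ) * Complex.I) := by
        field_simp
        push_cast
        ring
      rw [this]
      exact Complex.exp_int_mul_two_pi_mul_I _
    rw [hpow, sub_self, zero_div]




theorem cog_has_canonical_representation (N : ℕ) (hN : 2 ≤ N) [NeZero N] (a : Fin N → ℝ)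
    (ha : ∀ s : Fin N, (∑ j : Fin N, a j * a (j + s)) = if s = 0 then 1 else 0) :
    ∃ θ : Fin N → ℝ,
      (∀ k : Fin N,
        a k = (Real.sqrt 2 / N) *
          ∑ n : Fin N, Real.cos ((2 * π * (n : ℕ) / N) * (k : ℕ) + θ n)) ∧
      ((∃ m : ℤ, θ 0 = π / 4 + 2 * π * m) ∨ (∃ m : ℤ, θ 0 = 5 * π / 4 + 2 * π * m)) ∧
      (∀ n : Fin N, n ≠ 0 → ∃ m : ℤ, θ n + θ (-n) = π / 2 + 2 * π * m) := by
  classical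
  have hNne : (N : ℝ) ≠ 0 := Nat.cast_ne_zero.mpr (NeZero.ne N)
  set c : Fin N → ℂ := fun n => ∑ k : Fin N, (a k : ℂ) * Efun N (-(n * k)) with hc
  have hconj : ∀ n, (starRingEnd ℂ) (c n) = c (-n) := by
    intro n
    simp only [hc, map_sum, map_mul, Complex.conj_ofReal, Efun_conj]
    refine Finset.sum_congr rfl (fun k _ => ?_)
    congr 2
    ring
  have hunit : ∀ n, c n * c (-n) = 1 := by
    intro n
    have hprod : c n * c (-n)
        = ∑ j : Fin N, ∑ s : Fin N, ((a j * a (j + s) : ℝ) : ℂ) * Efun N (n * s) := by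
      simp only [hc]
      rw [Finset.sum_mul_sum]
      refine Finset.sum_congr rfl (fun j _ => ?_)
      rw [← Equiv.sum_comp (Equiv.addLeft j)
        (fun k => (a j : ℂ) * Efun N (-(n * j)) * ((a k : ℂ) * Efun N (-(-n * k))))]
      refine Finset.sum_congr rfl (fun s _ => ?_)
      simp only [Equiv.coe_addLeft]
      have hE : Efun N (-(n * j)) * Efun N (-(-n * (j + s))) = Efun N (n * s) := by
        rw [← Efun_add]; congr 1; ring
      push_cast
      linear_combination ((a j : ℂ) * (a (j + s) : ℂ)) * hE
    rw [hprod, Finset.sum_comm]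
    have h1 : ∀ s : Fin N,
        (∑ j : Fin N, ((a j * a (j + s) : ℝ) : ℂ) * Efun N (n * s))
        = (if s = 0 then (1:ℂ) else 0) * Efun N (n * s) := by
      intro s
      rw [← Finset.sum_mul]
      congr 1
      rw [← Complex.ofReal_sum, ha s]
      split <;> simp
    simp only [h1]
    simp [Finset.sum_ite_eq', Efun_zero]
  have habs : ∀ n, ‖c n‖ = 1 := by
    intro n
    have h := hunit n
    rw [← hconj n, Complex.mul_conj] at h
    have h2 : Complex.normSq (c n) = 1 := by exact_mod_cast h
    rw [Complex.normSq_eq_norm_sq] at h2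
    nlinarith [norm_nonneg (c n)]
  have hinv : ∀ k : Fin N, ∑ n : Fin N, c n * Efun N (n * k) = ((N * a k : ℝ) : ℂ) := by
    intro k
    have step : ∀ n : Fin N, c n * Efun N (n * k)
        = ∑ j : Fin N, (a j : ℂ) * Efun N (n * (k - j)) := by
      intro n
      simp only [hc]
      rw [Finset.sum_mul]
      refine Finset.sum_congr rfl (fun j _ => ?_)
      have hE : Efun N (-(n * j)) * Efun N (n * k) = Efun N (n * (k - j)) := by
        rw [← Efun_add]; congr 1; ring
      linear_combination (a j : ℂ) * hE
    simp only [step]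
    rw [Finset.sum_comm]
    have h1 : ∀ j : Fin N,
        (∑ n : Fin N, (a j : ℂ) * Efun N (n * (k - j)))
        = (a j : ℂ) * (if j = k then (N : ℂ) else 0) := by
      intro j
      rw [← Finset.mul_sum, Efun_orth]
      congr 1
      simp [sub_eq_zero, eq_comm]
    simp only [h1]
    simp only [mul_ite, mul_zero, Finset.sum_ite_eq', Finset.mem_univ, if_true]
    push_cast
    ring
  set φ : Fin N → ℝ := fun n => (c n).arg with hφ
  have hcexp : ∀ n, c n = Complex.exp ((φ n : ℂ) * Complex.I) := by
    intro n
    conv_lhs => rw [← Complex.norm_mul_exp_arg_mul_I (c n)]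
    rw [habs n, Complex.ofReal_one, one_mul]
  have hterm : ∀ n k : Fin N, c n * Efun N (n * k)
      = Complex.exp (((2 * π * (n : ℕ) / N * (k : ℕ) + φ n : ℝ) : ℂ) * Complex.I) := by
    intro n k
    rw [hcexp n, Efun_mul_val, ← Complex.exp_add]
    congr 1
    push_cast
    ring
  have hre : ∀ k : Fin N,
      (N : ℝ) * a k = ∑ n : Fin N, Real.cos (2 * π * (n : ℕ) / N * (k : ℕ) + φ n) := by
    intro k
    have h := congrArg Complex.re (hinv k)
    rw [Complex.ofReal_re] at h
    rw [← h, Complex.re_sum]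
    refine Finset.sum_congr rfl (fun n _ => ?_)
    rw [hterm n k, Complex.exp_ofReal_mul_I_re]
  have him : ∀ k : Fin N,
      (0 : ℝ) = ∑ n : Fin N, Real.sin (2 * π * (n : ℕ) / N * (k : ℕ) + φ n) := by
    intro k
    have h := congrArg Complex.im (hinv k)
    rw [Complex.ofReal_im] at h
    rw [← h, Complex.im_sum]
    refine Finset.sum_congr rfl (fun n _ => ?_)
    rw [hterm n k, Complex.exp_ofReal_mul_I_im]
  refine ⟨fun n => φ n + π / 4, ?_, ?_, ?_⟩
  · intro k
    have hsum : ∑ n : Fin N, Real.cos (2 * π * (n : ℕ) / N * (k : ℕ) + (φ n + π / 4))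
        = (Real.sqrt 2 / 2) * ((N : ℝ) * a k - 0) := by
      rw [hre k, him k, ← Finset.sum_sub_distrib, Finset.mul_sum]
      refine Finset.sum_congr rfl (fun n _ => ?_)
      rw [show 2 * π * (n : ℕ) / N * (k : ℕ) + (φ n + π / 4)
          = (2 * π * (n : ℕ) / N * (k : ℕ) + φ n) + π / 4 by ring,
        Real.cos_add, Real.cos_pi_div_four, Real.sin_pi_div_four]
      ring
    rw [hsum]
    have h2 : Real.sqrt 2 * Real.sqrt 2 = 2 := Real.mul_self_sqrt (by norm_num)
    field_simp
    linear_combination (-(N : ℝ) * a k) * h2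
  · have h0 : c 0 * c 0 = 1 := by have := hunit 0; rwa [neg_zero] at this
    rcases mul_self_eq_one_iff.mp h0 with h | h
    · left
      refine ⟨0, ?_⟩
      simp only [hφ]
      rw [h, Complex.arg_one]
      ring
    · right
      refine ⟨0, ?_⟩
      simp only [hφ]
      rw [h, Complex.arg_neg_one]
      ring
  · intro n hn
    have harg : φ (-n) = if φ n = π then π else -φ n := by
      simp only [hφ]
      rw [← hconj n, Complex.arg_conj]
    by_cases hp : φ n = π
    · refine ⟨1, ?_⟩
      show φ n + π / 4 + (φ (-n) + π / 4) = π / 2 + 2 * π * ((1 : ℤ) : ℝ)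
      rw [harg, if_pos hp, hp]
      push_cast
      ring
    · refine ⟨0, ?_⟩
      show φ n + π / 4 + (φ (-n) + π / 4) = π / 2 + 2 * π * ((0 : ℤ) : ℝ)
      rw [harg, if_neg hp]
      push_cast
      ring
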